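/- arXiv:2308.13843 — 2 statements merged into one kernel-verified Lean document; each statement's English description precedes it below -/
import Mathlib

section
/- Let F : X → Y and G : Y → Z be shape morphisms of topological spaces. If sd F ≤ n or sd G ≤ n, then sd(G ∘ F) ≤ n. -/
universe u

noncomputable section

namespace ShapePaper

open CategoryTheory

/-! ### H-maps: morphisms of the homotopy category HTop -/

/-- The setoid of continuous maps up to homotopy. -/
def homotopySetoid (X Y : Type u) [TopologicalSpace X] [TopologicalSpace Y] :
    Setoid C(X, Y) :=
  ⟨ContinuousMap.Homotopic, ContinuousMap.Homotopic.equivalence⟩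

/-- An H-map `X → Y` is a homotopy class of continuous maps `X → Y`,
i.e. a morphism of the homotopy category `HTop`. -/
def HMap (X Y : Type u) [TopologicalSpace X] [TopologicalSpace Y] : Type u :=
  Quotient (homotopySetoid X Y)

variable {X Y Z W : Type u} [TopologicalSpace X] [TopologicalSpace Y]
  [TopologicalSpace Z] [TopologicalSpace W]

/-- The H-map (homotopy class) of a continuous map. -/
def HMap.mk (f : C(X, Y)) : HMap X Y := Quotient.mk (homotopySetoid X Y) f

/-- The identity H-map. -/
protected def HMap.id (X : Type u) [TopologicalSpace X] : HMap X X :=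
  HMap.mk (ContinuousMap.id X)

/-- Composition of H-maps. -/
protected def HMap.comp (g : HMap Y Z) (f : HMap X Y) : HMap X Z :=
  Quotient.liftOn₂ g f (fun g f => HMap.mk (g.comp f))
    (fun _ _ _ _ hg hf => Quotient.sound (ContinuousMap.Homotopic.comp hg hf))

theorem HMap.comp_assoc (h : HMap Z W) (g : HMap Y Z) (f : HMap X Y) :
    HMap.comp (HMap.comp h g) f = HMap.comp h (HMap.comp g f) := by
  induction h using Quotient.inductionOn
  induction g using Quotient.inductionOn
  induction f using Quotient.inductionOn
  rfl

theorem HMap.id_comp (f : HMap X Y) : HMap.comp (HMap.id Y) f = f := by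
  induction f using Quotient.inductionOn
  rfl

theorem HMap.comp_id (f : HMap X Y) : HMap.comp f (HMap.id X) = f := by
  induction f using Quotient.inductionOn
  rfl

/-! ### Polyhedra and the category HPol -/

/-- A realization of the space `P` as (the space of) a simplicial complex. -/
structure PolyhedralRealization (P : Type u) [TopologicalSpace P] where
  /-- the ambient topological real vector space -/
  E : Type u
  [addCommGroup : AddCommGroup E]
  [module : Module ℝ E]
  [topE : TopologicalSpace E]
  /-- the simplicial complex -/
  complex : Geometry.SimplicialComplex ℝ E
  /-- `P` is homeomorphic to the space (carrier) of the complex -/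
  homeo : P ≃ₜ complex.space

attribute [instance] PolyhedralRealization.addCommGroup PolyhedralRealization.module
  PolyhedralRealization.topE

/-- The realization has dimension `≤ n`: every simplex has at most `n + 1` vertices. -/
def PolyhedralRealization.DimLE {P : Type u} [TopologicalSpace P]
    (R : PolyhedralRealization P) (n : ℕ) : Prop :=
  ∀ s ∈ R.complex.faces, s.card ≤ n + 1

/-- `P` is a polyhedron. -/
def IsPolyhedron (P : Type u) [TopologicalSpace P] : Prop :=
  Nonempty (PolyhedralRealization P)

/-- `P` is a polyhedron of dimension `≤ n`. -/
def IsPolyhedronDimLE (P : Type u) [TopologicalSpace P] (n : ℕ) : Prop :=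
  ∃ R : PolyhedralRealization P, R.DimLE n

/-- `X` is an object of `HPol`, i.e. has the homotopy type of a polyhedron. -/
def InHPol (X : Type u) [TopologicalSpace X] : Prop :=
  ∃ (P : Type u) (_ : TopologicalSpace P), IsPolyhedron P ∧
    Nonempty (ContinuousMap.HomotopyEquiv X P)

/-- The H-map `f` factors in `HPol` through some polyhedron of dimension `≤ n`. -/
def HMap.FactorsThruPolyhedronDimLE (f : HMap X Y) (n : ℕ) : Prop :=
  ∃ (P : Type u) (_ : TopologicalSpace P), IsPolyhedronDimLE P n ∧
    ∃ (u : HMap X P) (v : HMap P Y), f = v.comp u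

/-- `X` is homotopy dominated by a polyhedron of dimension `≤ n`. -/
def DominatedByPolyhedronDimLE (X : Type u) [TopologicalSpace X] (n : ℕ) : Prop :=
  ∃ (P : Type u) (_ : TopologicalSpace P), IsPolyhedronDimLE P n ∧
    ∃ (s : HMap X P) (d : HMap P X), d.comp s = HMap.id X

/-! ### Inverse systems in HPol -/

/-- An inverse system in the category `HPol`: a directed index set `Idx`, spaces `obj i`
having the homotopy type of polyhedra, and bonding H-maps. -/
structure InverseSystem : Type (u + 1) where
  /-- the index set -/
  Idx : Type u
  [preorder : Preorder Idx]
  [idxNonempty : Nonempty Idx]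
  directed : ∀ a b : Idx, ∃ c, a ≤ c ∧ b ≤ c
  /-- the terms of the system -/
  obj : Idx → Type u
  [topObj : ∀ i, TopologicalSpace (obj i)]
  inHPol : ∀ i, InHPol (obj i)
  /-- the bonding H-maps -/
  bond : ∀ {i j : Idx}, i ≤ j → HMap (obj j) (obj i)
  bond_refl : ∀ i : Idx, bond (le_refl i) = HMap.id (obj i)
  bond_trans : ∀ {i j k : Idx} (hij : i ≤ j) (hjk : j ≤ k),
    HMap.comp (bond hij) (bond hjk) = bond (hij.trans hjk)

attribute [instance] InverseSystem.preorder InverseSystem.idxNonempty InverseSystem.topObj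

/-- A morphism of inverse systems in `HPol`. -/
structure SysMor (𝓧 𝓨 : InverseSystem.{u}) : Type u where
  /-- the index function `φ` -/
  idxMap : 𝓨.Idx → 𝓧.Idx
  /-- the H-maps `f_μ : X_{φ(μ)} → Y_μ` -/
  hmap : ∀ μ : 𝓨.Idx, HMap (𝓧.obj (idxMap μ)) (𝓨.obj μ)
  coherent : ∀ {μ μ' : 𝓨.Idx} (h : μ ≤ μ'),
    ∃ (l : 𝓧.Idx) (h₁ : idxMap μ ≤ l) (h₂ : idxMap μ' ≤ l),
      (𝓨.bond h).comp ((hmap μ').comp (𝓧.bond h₂)) = (hmap μ).comp (𝓧.bond h₁)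

variable {𝓧 𝓨 𝓩 : InverseSystem.{u}}

/-- `f_{μλ} := f_μ ∘ p_{φ(μ)λ}` for `λ ≥ φ(μ)`. -/
def SysMor.shift (F : SysMor 𝓧 𝓨) (μ : 𝓨.Idx) {l : 𝓧.Idx} (h : F.idxMap μ ≤ l) :
    HMap (𝓧.obj l) (𝓨.obj μ) :=
  (F.hmap μ).comp (𝓧.bond h)

theorem SysMor.shift_comp (F : SysMor 𝓧 𝓨) (μ : 𝓨.Idx) {l l' : 𝓧.Idx}
    (h : F.idxMap μ ≤ l) (h' : l ≤ l') :
    (F.shift μ h).comp (𝓧.bond h') = F.shift μ (h.trans h') := by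
  rw [SysMor.shift, SysMor.shift, HMap.comp_assoc, 𝓧.bond_trans]

/-- Coherence, pushed up to all larger indices. -/
theorem SysMor.coherent' (F : SysMor 𝓧 𝓨) {μ μ' : 𝓨.Idx} (h : μ ≤ μ') :
    ∃ (l : 𝓧.Idx) (h₁ : F.idxMap μ ≤ l) (h₂ : F.idxMap μ' ≤ l),
      ∀ {l' : 𝓧.Idx} (hl : l ≤ l'),
        (𝓨.bond h).comp ((F.hmap μ').comp (𝓧.bond (h₂.trans hl))) =
          (F.hmap μ).comp (𝓧.bond (h₁.trans hl)) := by
  obtain ⟨l, h₁, h₂, heq⟩ := F.coherent h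
  refine ⟨l, h₁, h₂, ?_⟩
  intro l' hl
  have := congrArg (fun t => HMap.comp t (𝓧.bond hl)) heq
  simpa only [HMap.comp_assoc, InverseSystem.bond_trans] using this

/-- The dimension of a morphism of inverse systems is `≤ n`. -/
def SysMor.DimLE (F : SysMor 𝓧 𝓨) (n : ℕ) : Prop :=
  ∀ μ : 𝓨.Idx, ∃ (l : 𝓧.Idx) (h : F.idxMap μ ≤ l),
    (F.shift μ h).FactorsThruPolyhedronDimLE n

/-- The dimension of an inverse system is `≤ n` : every term is homotopy dominated by
a polyhedron of dimension `≤ n`. -/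
def InverseSystem.DimLE (𝓧 : InverseSystem.{u}) (n : ℕ) : Prop :=
  ∀ i : 𝓧.Idx, DominatedByPolyhedronDimLE (𝓧.obj i) n

/-- Equivalence of morphisms of inverse systems. -/
def SysMor.Equiv (F G : SysMor 𝓧 𝓨) : Prop :=
  ∀ μ : 𝓨.Idx, ∃ (l : 𝓧.Idx) (h₁ : F.idxMap μ ≤ l) (h₂ : G.idxMap μ ≤ l),
    F.shift μ h₁ = G.shift μ h₂

/-- A pro-morphism (morphism of pro-HPol) is an equivalence class of morphisms
of inverse systems. -/
def ProMor (𝓧 𝓨 : InverseSystem.{u}) : Type u :=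
  Quot (@SysMor.Equiv 𝓧 𝓨)

/-- The pro-morphism represented by a morphism of inverse systems. -/
def ProMor.mk (F : SysMor 𝓧 𝓨) : ProMor 𝓧 𝓨 := Quot.mk _ F

/-- The dimension of a pro-morphism is `≤ n` if it admits a representative of
dimension `≤ n`. -/
def ProMor.DimLE (f : ProMor 𝓧 𝓨) (n : ℕ) : Prop :=
  ∃ F : SysMor 𝓧 𝓨, ProMor.mk F = f ∧ F.DimLE n

/-- The identity morphism of an inverse system. -/
def SysMor.identity (𝓧 : InverseSystem.{u}) : SysMor 𝓧 𝓧 where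
  idxMap := id
  hmap i := HMap.id (𝓧.obj i)
  coherent := by
    intro μ μ' h
    refine ⟨μ', h, le_refl _, ?_⟩
    show (𝓧.bond h).comp ((HMap.id _).comp (𝓧.bond (le_refl μ'))) =
      (HMap.id _).comp (𝓧.bond h)
    rw [HMap.id_comp, HMap.id_comp, 𝓧.bond_trans]

/-- Composition of morphisms of inverse systems. -/
def SysMor.comp (G : SysMor 𝓨 𝓩) (F : SysMor 𝓧 𝓨) : SysMor 𝓧 𝓩 where
  idxMap := F.idxMap ∘ G.idxMap
  hmap ν := (G.hmap ν).comp (F.hmap (G.idxMap ν))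
  coherent := by
    intro ν ν' h
    obtain ⟨μ, hμ₁, hμ₂, hg⟩ := G.coherent h
    obtain ⟨l₁, h₁₁, h₁₂, hf₁⟩ := F.coherent' hμ₁
    obtain ⟨l₂, h₂₁, h₂₂, hf₂⟩ := F.coherent' hμ₂
    obtain ⟨l, hl₁, hl₂⟩ := 𝓧.directed l₁ l₂
    refine ⟨l, h₁₁.trans hl₁, h₂₁.trans hl₂, ?_⟩
    have e₁ := hf₁ hl₁
    have e₂ := hf₂ hl₂
    have hg₂ := congrArg
      (fun t => HMap.comp t ((F.hmap μ).comp (𝓧.bond (h₂₂.trans hl₂)))) hg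
    simp only [HMap.comp_assoc] at hg₂ e₁ e₂ ⊢
    rw [← e₂, hg₂, ← e₁]

/-- Composition of pro-morphisms (via choice of representatives). -/
def ProMor.comp (g : ProMor 𝓨 𝓩) (f : ProMor 𝓧 𝓨) : ProMor 𝓧 𝓩 :=
  ProMor.mk ((Quot.out g).comp (Quot.out f))

/-- The identity pro-morphism. -/
protected def ProMor.id (𝓧 : InverseSystem.{u}) : ProMor 𝓧 𝓧 :=
  ProMor.mk (SysMor.identity 𝓧)

/-- `α` is an isomorphism of pro-HPol. -/
def ProMor.IsIso (α : ProMor 𝓧 𝓨) : Prop :=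
  ∃ β : ProMor 𝓨 𝓧, β.comp α = ProMor.id 𝓧 ∧ α.comp β = ProMor.id 𝓨

/-! ### Restriction to a cofinal subset -/

/-- The subsystem of `𝓨` determined by a cofinal subset `S` of the index set. -/
def InverseSystem.restrict (𝓨 : InverseSystem.{u}) (S : Set 𝓨.Idx)
    (hcof : ∀ μ : 𝓨.Idx, ∃ μ' ∈ S, μ ≤ μ') : InverseSystem.{u} where
  Idx := ↥S
  idxNonempty := by
    obtain ⟨μ⟩ := 𝓨.idxNonempty
    obtain ⟨μ', hs, -⟩ := hcof μ
    exact ⟨⟨μ', hs⟩⟩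
  directed a b := by
    obtain ⟨c, hac, hbc⟩ := 𝓨.directed a b
    obtain ⟨c', hs, hcc'⟩ := hcof c
    exact ⟨⟨c', hs⟩, Subtype.coe_le_coe.mp (le_trans hac hcc'),
      Subtype.coe_le_coe.mp (le_trans hbc hcc')⟩
  obj i := 𝓨.obj i
  topObj i := 𝓨.topObj i
  inHPol i := 𝓨.inHPol i
  bond h := 𝓨.bond h
  bond_refl i := 𝓨.bond_refl i
  bond_trans h₁ h₂ := 𝓨.bond_trans h₁ h₂

/-- The morphism induced by `F : 𝓧 → 𝓨` and the inclusion of a cofinal subset of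
the index set of `𝓨`. -/
def SysMor.restrict (F : SysMor 𝓧 𝓨) (S : Set 𝓨.Idx)
    (hcof : ∀ μ : 𝓨.Idx, ∃ μ' ∈ S, μ ≤ μ') : SysMor 𝓧 (𝓨.restrict S hcof) where
  idxMap μ := F.idxMap μ.val
  hmap μ := F.hmap μ.val
  coherent := by
    intro μ μ' h
    exact F.coherent h

/-! ### Expansions and shape dimension -/

/-- An `HPol`-expansion of the topological space `X`. -/
structure Expansion (X : Type u) [TopologicalSpace X] (𝓧 : InverseSystem.{u}) where
  /-- the projection H-maps `p_λ : X → X_λ` -/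
  proj : ∀ l : 𝓧.Idx, HMap X (𝓧.obj l)
  proj_bond : ∀ {l l' : 𝓧.Idx} (h : l ≤ l'), (𝓧.bond h).comp (proj l') = proj l
  /-- every H-map into a space of `HPol` factors through some term of the system -/
  factors : ∀ (P : Type u) [TopologicalSpace P], InHPol P → ∀ f : HMap X P,
    ∃ (l : 𝓧.Idx) (g : HMap (𝓧.obj l) P), g.comp (proj l) = f
  /-- the factorization is unique after passing to a larger index -/
  factors_unique : ∀ (P : Type u) [TopologicalSpace P], InHPol P →
    ∀ (l : 𝓧.Idx) (g g' : HMap (𝓧.obj l) P), g.comp (proj l) = g'.comp (proj l) →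
      ∃ (l' : 𝓧.Idx) (h : l ≤ l'), g.comp (𝓧.bond h) = g'.comp (𝓧.bond h)

/-- The shape dimension of a topological space is `≤ n`: `X` admits an
`HPol`-expansion all of whose terms are homotopy dominated by polyhedra of
dimension `≤ n`. -/
def ShapeDimLE (X : Type u) [TopologicalSpace X] (n : ℕ) : Prop :=
  ∃ (𝓧 : InverseSystem.{u}) (_ : Expansion X 𝓧), 𝓧.DimLE n

/-- The morphism of inverse systems `F` represents the H-map `f` with respect to the
expansions `pX` and `pY`, i.e. `q_μ ∘ f = f_μ ∘ p_{φ(μ)}` for all `μ`. -/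
def Represents {X Y : Type u} [TopologicalSpace X] [TopologicalSpace Y]
    {𝓧 𝓨 : InverseSystem.{u}} (pX : Expansion X 𝓧) (pY : Expansion Y 𝓨)
    (f : HMap X Y) (F : SysMor 𝓧 𝓨) : Prop :=
  ∀ μ : 𝓨.Idx, (F.hmap μ).comp (pX.proj (F.idxMap μ)) = (pY.proj μ).comp f

/-- The shape dimension of an H-map `f : X → Y` is `≤ n`: the shape morphism
induced by `f` admits a representation by a pro-morphism of dimension `≤ n`. -/
def HMapShapeDimLE {X Y : Type u} [TopologicalSpace X] [TopologicalSpace Y]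
    (f : HMap X Y) (n : ℕ) : Prop :=
  ∃ (𝓧 𝓨 : InverseSystem.{u}) (pX : Expansion X 𝓧) (pY : Expansion Y 𝓨)
    (F : SysMor 𝓧 𝓨), Represents pX pY f F ∧ (ProMor.mk F).DimLE n

/-- The shape dimension of a space, as an extended natural number. -/
def shapeDim (X : Type u) [TopologicalSpace X] : ℕ∞ :=
  sInf {n : ℕ∞ | ∃ m : ℕ, n = (m : ℕ∞) ∧ ShapeDimLE X m}

/-- The shape dimension of an H-map, as an extended natural number. -/
def hmapShapeDim {X Y : Type u} [TopologicalSpace X] [TopologicalSpace Y]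
    (f : HMap X Y) : ℕ∞ :=
  sInf {n : ℕ∞ | ∃ m : ℕ, n = (m : ℕ∞) ∧ HMapShapeDimLE f m}

end ShapePaper

namespace ShapePaper

variable {X Y Z W : Type u} [TopologicalSpace X] [TopologicalSpace Y]
  [TopologicalSpace Z] [TopologicalSpace W]
variable {𝓧 𝓨 𝓩 : InverseSystem.{u}}

theorem factors_comp_left {f : HMap X Y} {n : ℕ}
    (hf : f.FactorsThruPolyhedronDimLE n) (g : HMap Y Z) :
    (g.comp f).FactorsThruPolyhedronDimLE n := by
  obtain ⟨P, _, hP, u, v, rfl⟩ := hf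
  exact ⟨P, ‹_›, hP, u, g.comp v, (HMap.comp_assoc _ _ _).symm⟩

theorem factors_comp_right {f : HMap X Y} {n : ℕ}
    (hf : f.FactorsThruPolyhedronDimLE n) (g : HMap W X) :
    (f.comp g).FactorsThruPolyhedronDimLE n := by
  obtain ⟨P, _, hP, u, v, rfl⟩ := hf
  exact ⟨P, ‹_›, hP, u.comp g, v, HMap.comp_assoc _ _ _⟩

theorem SysMor.Equiv.refl (F : SysMor 𝓧 𝓨) : F.Equiv F :=
  fun μ => ⟨F.idxMap μ, le_refl _, le_refl _, rfl⟩

theorem SysMor.Equiv.symm {F G : SysMor 𝓧 𝓨} (h : F.Equiv G) : G.Equiv F := by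
  intro μ
  obtain ⟨l, h₁, h₂, he⟩ := h μ
  exact ⟨l, h₂, h₁, he.symm⟩

theorem SysMor.Equiv.trans {F G H : SysMor 𝓧 𝓨} (h : F.Equiv G) (h' : G.Equiv H) :
    F.Equiv H := by
  intro μ
  obtain ⟨l₁, a₁, a₂, e₁⟩ := h μ
  obtain ⟨l₂, b₁, b₂, e₂⟩ := h' μ
  obtain ⟨l, hl₁, hl₂⟩ := 𝓧.directed l₁ l₂
  refine ⟨l, a₁.trans hl₁, b₂.trans hl₂, ?_⟩
  have e₁' := congrArg (fun t => HMap.comp t (𝓧.bond hl₁)) e₁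
  have e₂' := congrArg (fun t => HMap.comp t (𝓧.bond hl₂)) e₂
  simp only [SysMor.shift_comp] at e₁' e₂'
  rw [e₁', ← e₂']

theorem equiv_of_mk_eq {F G : SysMor 𝓧 𝓨} (h : ProMor.mk F = ProMor.mk G) :
    F.Equiv G := by
  have hE := Quot.eqvGen_exact h
  clear h
  induction hE with
  | rel _ _ h => exact h
  | refl => exact SysMor.Equiv.refl _
  | symm _ _ _ ih => exact ih.symm
  | trans _ _ _ _ _ ih₁ ih₂ => exact ih₁.trans ih₂

theorem SysMor.DimLE.of_equiv {F G : SysMor 𝓧 𝓨} {n : ℕ} (he : F.Equiv G)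
    (hd : F.DimLE n) : G.DimLE n := by
  intro μ
  obtain ⟨l₁, h₁, hf⟩ := hd μ
  obtain ⟨l₂, a₁, a₂, e⟩ := he μ
  obtain ⟨l, hl₁, hl₂⟩ := 𝓧.directed l₁ l₂
  refine ⟨l, a₂.trans hl₂, ?_⟩
  have e' := congrArg (fun t => HMap.comp t (𝓧.bond hl₂)) e
  simp only [SysMor.shift_comp] at e'
  have key : G.shift μ (a₂.trans hl₂) = (F.shift μ h₁).comp (𝓧.bond hl₁) := by
    rw [SysMor.shift_comp, ← e']
  rw [key]
  exact factors_comp_right hf _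

theorem comp_dimLE_left (G : SysMor 𝓨 𝓩) {F : SysMor 𝓧 𝓨} {n : ℕ}
    (hF : F.DimLE n) : (G.comp F).DimLE n := by
  intro ν
  obtain ⟨l, h, hf⟩ := hF (G.idxMap ν)
  refine ⟨l, h, ?_⟩
  have key : (G.comp F).shift ν h = (G.hmap ν).comp (F.shift (G.idxMap ν) h) := by
    show ((G.hmap ν).comp (F.hmap (G.idxMap ν))).comp (𝓧.bond h) = _
    rw [HMap.comp_assoc]; rfl
  rw [key]
  exact factors_comp_left hf _

theorem comp_dimLE_right {G : SysMor 𝓨 𝓩} (F : SysMor 𝓧 𝓨) {n : ℕ}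
    (hG : G.DimLE n) : (G.comp F).DimLE n := by
  intro ν
  obtain ⟨μ, hμ, hf⟩ := hG ν
  obtain ⟨l, h₁, h₂, he⟩ := F.coherent' hμ
  refine ⟨l, h₁, ?_⟩
  have e := he (le_refl l)
  have key : (G.comp F).shift ν h₁ =
      (G.shift ν hμ).comp ((F.hmap μ).comp (𝓧.bond h₂)) := by
    show ((G.hmap ν).comp (F.hmap (G.idxMap ν))).comp (𝓧.bond h₁) = _
    calc ((G.hmap ν).comp (F.hmap (G.idxMap ν))).comp (𝓧.bond h₁)
        = (G.hmap ν).comp ((F.hmap (G.idxMap ν)).comp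
            (𝓧.bond (h₁.trans (le_refl l)))) := by rw [HMap.comp_assoc]
      _ = (G.hmap ν).comp ((𝓨.bond hμ).comp ((F.hmap μ).comp
            (𝓧.bond (h₂.trans (le_refl l))))) := by rw [e]
      _ = (G.shift ν hμ).comp ((F.hmap μ).comp (𝓧.bond h₂)) := by
            rw [SysMor.shift, HMap.comp_assoc]
  rw [key]
  exact factors_comp_right hf _

/-- **Corollary 2.14.** Let `F : X → Y`, `G : Y → Z` be two shape morphisms of
topological spaces (given, with respect to HPol-expansions of `X`, `Y` and `Z`, by
morphisms of inverse systems `F` and `G`). If `sd F ≤ n` or `sd G ≤ n`, then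
`sd (G ∘ F) ≤ n`. -/
theorem shapeMor_comp_sdLE (X Y Z : Type u)
    [TopologicalSpace X] [TopologicalSpace Y] [TopologicalSpace Z]
    (𝓧 𝓨 𝓩 : InverseSystem.{u})
    (pX : Expansion X 𝓧) (pY : Expansion Y 𝓨) (pZ : Expansion Z 𝓩)
    (F : SysMor 𝓧 𝓨) (G : SysMor 𝓨 𝓩) (n : ℕ)
    (h : (ProMor.mk F).DimLE n ∨ (ProMor.mk G).DimLE n) :
    ((ProMor.mk G).comp (ProMor.mk F)).DimLE n := by
  refine ⟨(Quot.out (ProMor.mk G)).comp (Quot.out (ProMor.mk F)), rfl, ?_⟩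
  rcases h with ⟨F', hmk, hdim⟩ | ⟨G', hmk, hdim⟩
  · exact comp_dimLE_left _
      (hdim.of_equiv (equiv_of_mk_eq (hmk.trans (Quot.out_eq _).symm)))
  · exact comp_dimLE_right _
      (hdim.of_equiv (equiv_of_mk_eq (hmk.trans (Quot.out_eq _).symm)))

end ShapePaper
end
end

section
/- Let F : X → Y be a shape isomorphism of topological spaces (an isomorphism in the shape category). If sd F = n, then sd X = sd Y = n. -/
universe u

noncomputable section

namespace ShapePaper


/-! ### Auxiliary lemmas: the equivalence of system morphisms -/

variable {𝓧 𝓨 𝓩 𝓦 : InverseSystem.{u}}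

theorem SysMor.equiv_refl (F : SysMor 𝓧 𝓨) : SysMor.Equiv F F :=
  fun μ => ⟨F.idxMap μ, le_refl _, le_refl _, rfl⟩

theorem SysMor.equiv_symm {F G : SysMor 𝓧 𝓨} (h : SysMor.Equiv F G) :
    SysMor.Equiv G F := by
  intro μ
  obtain ⟨l, h₁, h₂, he⟩ := h μ
  exact ⟨l, h₂, h₁, he.symm⟩

theorem SysMor.equiv_trans {F G H : SysMor 𝓧 𝓨} (h : SysMor.Equiv F G)
    (h' : SysMor.Equiv G H) : SysMor.Equiv F H := by
  intro μ
  obtain ⟨l, h₁, h₂, he⟩ := h μ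
  obtain ⟨l', h₁', h₂', he'⟩ := h' μ
  obtain ⟨k, hk, hk'⟩ := 𝓧.directed l l'
  refine ⟨k, h₁.trans hk, h₂'.trans hk', ?_⟩
  rw [← F.shift_comp μ h₁ hk, he, G.shift_comp μ h₂ hk,
    show h₂.trans hk = h₁'.trans hk' from rfl, ← G.shift_comp μ h₁' hk', he',
    H.shift_comp μ h₂' hk']

theorem SysMor.equivalence_equiv :
    Equivalence (@SysMor.Equiv 𝓧 𝓨) :=
  ⟨SysMor.equiv_refl, SysMor.equiv_symm, SysMor.equiv_trans⟩

theorem ProMor.mk_eq_mk_iff {F G : SysMor 𝓧 𝓨} :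
    ProMor.mk F = ProMor.mk G ↔ SysMor.Equiv F G :=
  Quot.eq.trans (SysMor.equivalence_equiv.eqvGen_iff)

theorem SysMor.comp_shift (A : SysMor 𝓨 𝓩) (B : SysMor 𝓧 𝓨) (ν : 𝓩.Idx)
    {l : 𝓧.Idx} (h : B.idxMap (A.idxMap ν) ≤ l) :
    (A.comp B).shift ν h = (A.hmap ν).comp (B.shift (A.idxMap ν) h) := by
  show ((A.hmap ν).comp (B.hmap (A.idxMap ν))).comp (𝓧.bond h) = _
  rw [HMap.comp_assoc]
  rfl

theorem SysMor.equiv_comp_left (A : SysMor 𝓨 𝓩) {B₁ B₂ : SysMor 𝓧 𝓨}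
    (h : SysMor.Equiv B₁ B₂) : SysMor.Equiv (A.comp B₁) (A.comp B₂) := by
  intro ν
  obtain ⟨l, h₁, h₂, he⟩ := h (A.idxMap ν)
  exact ⟨l, h₁, h₂, by rw [SysMor.comp_shift, SysMor.comp_shift, he]⟩

theorem SysMor.equiv_comp_right {A₁ A₂ : SysMor 𝓨 𝓩} (B : SysMor 𝓧 𝓨)
    (h : SysMor.Equiv A₁ A₂) : SysMor.Equiv (A₁.comp B) (A₂.comp B) := by
  intro ν
  obtain ⟨m, hm₁, hm₂, he⟩ := h ν
  obtain ⟨l₁, a₁, b₁, hc₁⟩ := B.coherent' hm₁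
  obtain ⟨l₂, a₂, b₂, hc₂⟩ := B.coherent' hm₂
  obtain ⟨l, hl₁, hl₂⟩ := 𝓧.directed l₁ l₂
  refine ⟨l, a₁.trans hl₁, a₂.trans hl₂, ?_⟩
  rw [SysMor.comp_shift, SysMor.comp_shift]
  show (A₁.hmap ν).comp ((B.hmap (A₁.idxMap ν)).comp (𝓧.bond (a₁.trans hl₁))) =
    (A₂.hmap ν).comp ((B.hmap (A₂.idxMap ν)).comp (𝓧.bond (a₂.trans hl₂)))
  rw [← hc₁ hl₁, ← hc₂ hl₂]
  have key : ∀ t : HMap (𝓧.obj l) (𝓨.obj m),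
      (A₁.hmap ν).comp ((𝓨.bond hm₁).comp t) = (A₂.hmap ν).comp ((𝓨.bond hm₂).comp t) := by
    intro t
    rw [← HMap.comp_assoc, ← HMap.comp_assoc]
    exact congrArg (fun z => z.comp t) he
  exact key _

theorem SysMor.equiv_comp_id (F : SysMor 𝓧 𝓨) :
    SysMor.Equiv (F.comp (SysMor.identity 𝓧)) F := by
  intro μ
  refine ⟨F.idxMap μ, le_refl _, le_refl _, ?_⟩
  show ((F.hmap μ).comp (HMap.id _)).comp (𝓧.bond _) = (F.hmap μ).comp (𝓧.bond _)
  rw [HMap.comp_id]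

theorem SysMor.dimLE_of_equiv {F₁ F₂ : SysMor 𝓧 𝓨} (h : SysMor.Equiv F₁ F₂)
    {m : ℕ} (hd : F₁.DimLE m) : F₂.DimLE m := by
  intro μ
  obtain ⟨l, h₁, h₂, he⟩ := h μ
  obtain ⟨l₀, h₀, Q, iQ, hQ, u, v, hfac⟩ := hd μ
  obtain ⟨l', hl, hl₀⟩ := 𝓧.directed l l₀
  refine ⟨l', h₂.trans hl, Q, iQ, hQ, u.comp (𝓧.bond hl₀), v, ?_⟩
  rw [← F₂.shift_comp μ h₂ hl, ← he, F₁.shift_comp μ h₁ hl,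
    show h₁.trans hl = h₀.trans hl₀ from rfl, ← F₁.shift_comp μ h₀ hl₀, hfac,
    HMap.comp_assoc]

theorem SysMor.dimLE_comp_left (A : SysMor 𝓨 𝓩) {B : SysMor 𝓧 𝓨} {m : ℕ}
    (hB : B.DimLE m) : (A.comp B).DimLE m := by
  intro ν
  obtain ⟨l, h, Q, iQ, hQ, u, v, hfac⟩ := hB (A.idxMap ν)
  refine ⟨l, h, Q, iQ, hQ, u, (A.hmap ν).comp v, ?_⟩
  rw [SysMor.comp_shift, hfac, ← HMap.comp_assoc]

theorem SysMor.dimLE_comp_right {A : SysMor 𝓨 𝓩} (B : SysMor 𝓧 𝓨) {m : ℕ}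
    (hA : A.DimLE m) : (A.comp B).DimLE m := by
  intro ν
  obtain ⟨m', h', Q, iQ, hQ, u, v, hfac⟩ := hA ν
  obtain ⟨l₁, a₁, b₁, hc⟩ := B.coherent' h'
  refine ⟨l₁, a₁, Q, iQ, hQ, u.comp ((B.hmap m').comp (𝓧.bond b₁)), v, ?_⟩
  rw [SysMor.comp_shift]
  show (A.hmap ν).comp ((B.hmap (A.idxMap ν)).comp (𝓧.bond a₁)) = _
  have := hc (le_refl l₁)
  rw [show a₁.trans (le_refl l₁) = a₁ from rfl, show b₁.trans (le_refl l₁) = b₁ from rfl] at this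
  rw [← this, ← HMap.comp_assoc,
    show (A.hmap ν).comp (𝓨.bond h') = v.comp u from hfac, HMap.comp_assoc]

theorem ProMor.comp_mk (A : SysMor 𝓨 𝓩) (B : SysMor 𝓧 𝓨) :
    ProMor.comp (ProMor.mk A) (ProMor.mk B) = ProMor.mk (A.comp B) := by
  show ProMor.mk (SysMor.comp _ _) = ProMor.mk (A.comp B)
  rw [ProMor.mk_eq_mk_iff]
  have hA : SysMor.Equiv (Quot.out (ProMor.mk A)) A :=
    ProMor.mk_eq_mk_iff.mp (Quot.out_eq _)
  have hB : SysMor.Equiv (Quot.out (ProMor.mk B)) B :=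
    ProMor.mk_eq_mk_iff.mp (Quot.out_eq _)
  exact SysMor.equiv_trans (SysMor.equiv_comp_right _ hA) (SysMor.equiv_comp_left _ hB)

/-! ### From factoring bonds to a dominated expansion -/

theorem inHPol_of_polyhedronDimLE {P : Type u} [TopologicalSpace P] {n : ℕ}
    (h : IsPolyhedronDimLE P n) : InHPol P := by
  obtain ⟨R, -⟩ := h
  exact ⟨P, ‹_›, ⟨R⟩, ⟨ContinuousMap.HomotopyEquiv.refl P⟩⟩

/-- The data of a choice, for each index `l`, of a larger index `L l` together with a
factorization of the bond `X_{L l} → X_l` through a polyhedron of dimension `≤ n`. -/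
structure BondFactorData (𝓧 : InverseSystem.{u}) (n : ℕ) where
  L : 𝓧.Idx → 𝓧.Idx
  hL : ∀ l, l ≤ L l
  P : 𝓧.Idx → Type u
  [tP : ∀ l, TopologicalSpace (P l)]
  hP : ∀ l, IsPolyhedronDimLE (P l) n
  hu : ∀ l, HMap (𝓧.obj (L l)) (P l)
  hv : ∀ l, HMap (P l) (𝓧.obj l)
  hfac : ∀ l, 𝓧.bond (hL l) = (hv l).comp (hu l)

attribute [instance] BondFactorData.tP

namespace BondFactorData

variable {n : ℕ} (D : BondFactorData 𝓧 n)

/-- The order on the index set of the new system. -/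
def qle (a b : 𝓧.Idx × ULift.{u} ℕ) : Prop :=
  a = b ∨ (D.L a.1 ≤ b.1 ∧ a.2.down < b.2.down)

theorem qle_refl (a : 𝓧.Idx × ULift.{u} ℕ) : D.qle a a := Or.inl rfl

theorem qle_trans {a b c : 𝓧.Idx × ULift.{u} ℕ} (hab : D.qle a b) (hbc : D.qle b c) :
    D.qle a c := by
  rcases hab with rfl | ⟨h1, h2⟩
  · exact hbc
  · rcases hbc with rfl | ⟨h1', h2'⟩
    · exact Or.inr ⟨h1, h2⟩
    · exact Or.inr ⟨h1.trans ((D.hL b.1).trans h1'), h2.trans h2'⟩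

/-- Transport of the identity along equal indices. -/
def qcast : ∀ {a b : 𝓧.Idx × ULift.{u} ℕ}, a = b → HMap (D.P b.1) (D.P a.1)
  | _, _, rfl => HMap.id _

open Classical in
/-- The bonds of the new system. -/
def qbond {a b : 𝓧.Idx × ULift.{u} ℕ} (h : D.qle a b) : HMap (D.P b.1) (D.P a.1) :=
  if hd : D.L a.1 ≤ b.1 ∧ a.2.down < b.2.down then
    ((D.hu a.1).comp (𝓧.bond hd.1)).comp (D.hv b.1)
  else D.qcast (h.resolve_right hd)

theorem qbond_pos {a b : 𝓧.Idx × ULift.{u} ℕ} (h : D.qle a b)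
    (hd : D.L a.1 ≤ b.1 ∧ a.2.down < b.2.down) :
    D.qbond h = ((D.hu a.1).comp (𝓧.bond hd.1)).comp (D.hv b.1) := by
  simp only [qbond]
  rw [dif_pos hd]

theorem qbond_refl {a : 𝓧.Idx × ULift.{u} ℕ} (h : D.qle a a) :
    D.qbond h = HMap.id (D.P a.1) := by
  simp only [qbond]
  rw [dif_neg (fun hd => lt_irrefl _ hd.2)]
  rfl

theorem qbond_trans {a b c : 𝓧.Idx × ULift.{u} ℕ} (hab : D.qle a b) (hbc : D.qle b c) :
    HMap.comp (D.qbond hab) (D.qbond hbc) = D.qbond (D.qle_trans hab hbc) := by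
  by_cases hd₁ : D.L a.1 ≤ b.1 ∧ a.2.down < b.2.down
  · by_cases hd₂ : D.L b.1 ≤ c.1 ∧ b.2.down < c.2.down
    · have hd₃ : D.L a.1 ≤ c.1 ∧ a.2.down < c.2.down :=
        ⟨hd₁.1.trans ((D.hL b.1).trans hd₂.1), hd₁.2.trans hd₂.2⟩
      rw [D.qbond_pos hab hd₁, D.qbond_pos hbc hd₂, D.qbond_pos _ hd₃]
      simp only [HMap.comp_assoc]
      rw [← HMap.comp_assoc (D.hv b.1) (D.hu b.1), ← D.hfac,
        ← HMap.comp_assoc (𝓧.bond (D.hL b.1)), 𝓧.bond_trans,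
        ← HMap.comp_assoc (𝓧.bond hd₁.1), 𝓧.bond_trans]
    · obtain rfl : b = c := hbc.resolve_right hd₂
      rw [D.qbond_refl hbc, HMap.comp_id]
  · obtain rfl : a = b := hab.resolve_right hd₁
    rw [D.qbond_refl hab, HMap.id_comp]

/-- The new inverse system: its terms are the polyhedra `P l`. -/
def system : InverseSystem.{u} where
  Idx := 𝓧.Idx × ULift.{u} ℕ
  preorder :=
    { le := D.qle
      lt := fun a b => D.qle a b ∧ ¬D.qle b a
      le_refl := D.qle_refl
      le_trans := fun _ _ _ => D.qle_trans
      lt_iff_le_not_ge := fun _ _ => Iff.rfl }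
  idxNonempty := ⟨(𝓧.idxNonempty.some, ⟨0⟩)⟩
  directed a b := by
    obtain ⟨c, h1, h2⟩ := 𝓧.directed (D.L a.1) (D.L b.1)
    exact ⟨(c, ⟨max a.2.down b.2.down + 1⟩),
      Or.inr ⟨h1, Nat.lt_succ_of_le (le_max_left _ _)⟩,
      Or.inr ⟨h2, Nat.lt_succ_of_le (le_max_right _ _)⟩⟩
  obj a := D.P a.1
  topObj a := D.tP a.1
  inHPol a := inHPol_of_polyhedronDimLE (D.hP a.1)
  bond h := D.qbond h
  bond_refl a := D.qbond_refl _
  bond_trans h₁ h₂ := D.qbond_trans h₁ h₂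

theorem system_dimLE : D.system.DimLE n := fun a =>
  ⟨D.P a.1, D.tP a.1, D.hP a.1, HMap.id _, HMap.id _, HMap.id_comp _⟩

variable {X : Type u} [TopologicalSpace X]

/-- The new system is again an expansion of `X`. -/
def expansion (pX : Expansion X 𝓧) : Expansion X D.system where
  proj a := (D.hu a.1).comp (pX.proj (D.L a.1))
  proj_bond {a b} h := by
    by_cases hd : D.L a.1 ≤ b.1 ∧ a.2.down < b.2.down
    · show ((D.qbond h).comp _) = _
      rw [D.qbond_pos h hd]
      simp only [HMap.comp_assoc]
      rw [← HMap.comp_assoc (D.hv b.1) (D.hu b.1), ← D.hfac, pX.proj_bond,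
        pX.proj_bond]
    · obtain rfl : a = b := (show D.qle a b from h).resolve_right hd
      show ((D.qbond h).comp _) = _
      rw [D.qbond_refl h, HMap.id_comp]
  factors Q _ hQ f := by
    obtain ⟨l, g, hg⟩ := pX.factors Q hQ f
    refine ⟨(l, ⟨0⟩), (g.comp (D.hv l) : HMap (D.P l) Q), ?_⟩
    show (g.comp (D.hv l)).comp ((D.hu l).comp (pX.proj (D.L l))) = f
    rw [HMap.comp_assoc, ← HMap.comp_assoc (D.hv l), ← D.hfac, pX.proj_bond, hg]
  factors_unique Q _ hQ a g g' hgg := by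
    have hgg' : (g.comp (D.hu a.1)).comp (pX.proj (D.L a.1)) =
        (g'.comp (D.hu a.1)).comp (pX.proj (D.L a.1)) := by
      exact (HMap.comp_assoc _ _ _).trans (hgg.trans (HMap.comp_assoc _ _ _).symm)
    obtain ⟨l₂, h₂, he⟩ := pX.factors_unique Q hQ (D.L a.1)
      (g.comp (D.hu a.1)) (g'.comp (D.hu a.1)) hgg'
    have hab : D.qle a (l₂, ⟨a.2.down + 1⟩) := Or.inr ⟨h₂, Nat.lt_succ_self _⟩
    refine ⟨(l₂, ⟨a.2.down + 1⟩), hab, ?_⟩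
    show g.comp (D.qbond hab) = g'.comp (D.qbond hab)
    rw [D.qbond_pos hab ⟨h₂, Nat.lt_succ_self _⟩]
    have key : ∀ g : HMap (D.P a.1) Q, g.comp (((D.hu a.1).comp (𝓧.bond h₂)).comp (D.hv l₂)) =
        ((g.comp (D.hu a.1)).comp (𝓧.bond h₂)).comp (D.hv l₂) := fun g => by
      simp only [HMap.comp_assoc]
    exact (key g).trans ((congrArg (fun t => t.comp (D.hv l₂)) he).trans (key g').symm)

end BondFactorData

/-- If all bonds of an expansion of `X` cofinally factor through polyhedra of
dimension `≤ n`, then `sd X ≤ n`. -/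
theorem shapeDimLE_of_bond_factors {X : Type u} [TopologicalSpace X]
    {𝓧 : InverseSystem.{u}} (pX : Expansion X 𝓧) {n : ℕ}
    (h : ∀ l : 𝓧.Idx, ∃ (l' : 𝓧.Idx) (hl : l ≤ l'),
      (𝓧.bond hl).FactorsThruPolyhedronDimLE n) :
    ShapeDimLE X n := by
  choose L hL P tP hP hu hv hfac using h
  let D : BondFactorData 𝓧 n := ⟨L, hL, P, hP, hu, hv, hfac⟩
  exact ⟨D.system, D.expansion pX, D.system_dimLE⟩

/-! ### The lower bound: `sd F ≤ sd X` -/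

/-- If `X` admits an expansion whose terms are dominated by polyhedra of dimension
`≤ m`, then every morphism of inverse systems out of any expansion of `X` has
dimension `≤ m`. -/
theorem SysMor.dimLE_of_dominated_expansion {X : Type u} [TopologicalSpace X]
    {𝓧 𝓧' 𝓨 : InverseSystem.{u}} (pX : Expansion X 𝓧) (pX' : Expansion X 𝓧')
    {m : ℕ} (hdom : 𝓧'.DimLE m) (F : SysMor 𝓧 𝓨) : F.DimLE m := by
  intro μ
  obtain ⟨l', g, hg⟩ := pX'.factors (𝓨.obj μ) (𝓨.inHPol μ)
    ((F.hmap μ).comp (pX.proj (F.idxMap μ)))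
  obtain ⟨Q, iQ, hQ, s, d, hsd⟩ := hdom l'
  obtain ⟨l₁, w, hw⟩ := pX.factors Q (inHPol_of_polyhedronDimLE hQ)
    (s.comp (pX'.proj l'))
  obtain ⟨l, hl, hl₁⟩ := 𝓧.directed (F.idxMap μ) l₁
  have hA : (F.shift μ hl).comp (pX.proj l) = (F.hmap μ).comp (pX.proj (F.idxMap μ)) := by
    rw [SysMor.shift, HMap.comp_assoc, pX.proj_bond]
  have hB : (((g.comp d).comp w).comp (𝓧.bond hl₁)).comp (pX.proj l) =
      (F.hmap μ).comp (pX.proj (F.idxMap μ)) := by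
    rw [HMap.comp_assoc (((g.comp d)).comp w), pX.proj_bond, HMap.comp_assoc, hw, ← hg,
      ← HMap.comp_assoc, HMap.comp_assoc g d s, hsd, HMap.comp_id]
  obtain ⟨l₂, hl₂, he⟩ := pX.factors_unique (𝓨.obj μ) (𝓨.inHPol μ) l
    (F.shift μ hl) (((g.comp d).comp w).comp (𝓧.bond hl₁)) (by rw [hA, hB])
  refine ⟨l₂, hl.trans hl₂, Q, iQ, hQ, w.comp (𝓧.bond (hl₁.trans hl₂)), g.comp d, ?_⟩
  rw [← F.shift_comp μ hl hl₂, he]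
  simp only [HMap.comp_assoc, InverseSystem.bond_trans]

/-! ### The upper bounds: factoring the bonds of `𝓧` and `𝓨` -/

theorem bond_factors_source {F : SysMor 𝓧 𝓨} {G : SysMor 𝓨 𝓧} {n : ℕ}
    (E₁ : SysMor.Equiv (SysMor.comp G F) (SysMor.identity 𝓧)) (hFn : F.DimLE n) :
    ∀ l : 𝓧.Idx, ∃ (l' : 𝓧.Idx) (hl : l ≤ l'),
      (𝓧.bond hl).FactorsThruPolyhedronDimLE n := by
  intro lam
  obtain ⟨l, h₁, h₂, he⟩ := E₁ lam
  obtain ⟨l₀, h₀, Q, iQ, hQ, u, v, hfac⟩ := hFn (G.idxMap lam)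
  obtain ⟨l₁, hll₁, hl₀l₁⟩ := 𝓧.directed l l₀
  refine ⟨l₁, h₂.trans hll₁, Q, iQ, hQ, u.comp (𝓧.bond hl₀l₁),
    (G.hmap lam).comp v, ?_⟩
  have e1 : 𝓧.bond (show lam ≤ l₁ from h₂.trans hll₁) =
      ((SysMor.comp G F).shift lam h₁).comp (𝓧.bond hll₁) := by
    rw [he]
    show 𝓧.bond _ = ((HMap.id _).comp (𝓧.bond h₂)).comp (𝓧.bond hll₁)
    rw [HMap.id_comp, InverseSystem.bond_trans]
  rw [e1, SysMor.shift_comp, SysMor.comp_shift G F lam (h₁.trans hll₁),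
    show h₁.trans hll₁ = h₀.trans hl₀l₁ from rfl,
    ← F.shift_comp (G.idxMap lam) h₀ hl₀l₁, hfac]
  simp only [HMap.comp_assoc]

theorem bond_factors_target {F : SysMor 𝓧 𝓨} {G : SysMor 𝓨 𝓧} {n : ℕ}
    (E₂ : SysMor.Equiv (SysMor.comp F G) (SysMor.identity 𝓨)) (hFn : F.DimLE n) :
    ∀ μ : 𝓨.Idx, ∃ (μ' : 𝓨.Idx) (hμ : μ ≤ μ'),
      (𝓨.bond hμ).FactorsThruPolyhedronDimLE n := by
  intro μ
  obtain ⟨m', h₁, h₂, he⟩ := E₂ μ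
  obtain ⟨l₀, h₀, Q, iQ, hQ, u, v, hfac⟩ := hFn μ
  obtain ⟨m₁, k₁, k₂, hcoh⟩ := G.coherent' h₀
  obtain ⟨M, hm'M, hm₁M⟩ := 𝓨.directed m' m₁
  refine ⟨M, h₂.trans hm'M, Q, iQ, hQ,
    u.comp ((G.hmap l₀).comp (𝓨.bond (k₂.trans hm₁M))), v, ?_⟩
  have e1 : 𝓨.bond (show μ ≤ M from h₂.trans hm'M) =
      ((SysMor.comp F G).shift μ h₁).comp (𝓨.bond hm'M) := by
    rw [he]
    show 𝓨.bond _ = ((HMap.id _).comp (𝓨.bond h₂)).comp (𝓨.bond hm'M)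
    rw [HMap.id_comp, InverseSystem.bond_trans]
  rw [e1, SysMor.shift_comp, SysMor.comp_shift F G μ (h₁.trans hm'M),
    show G.shift (F.idxMap μ) (h₁.trans hm'M) =
      (G.hmap (F.idxMap μ)).comp (𝓨.bond (k₁.trans hm₁M)) from rfl,
    ← hcoh hm₁M, ← HMap.comp_assoc,
    show (F.hmap μ).comp (𝓧.bond h₀) = v.comp u from hfac]
  simp only [HMap.comp_assoc]

/-- **Theorem 2.20.** Let `F : X → Y` be a shape isomorphism of topological spaces
(given, with respect to HPol-expansions of `X` and `Y`, by a morphism of inverse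
systems `F`, with two-sided inverse `G`).  If `sd F = n` then `sd X = sd Y = n`. -/
theorem shapeDim_eq_of_iso (X Y : Type u) [TopologicalSpace X] [TopologicalSpace Y]
    (𝓧 𝓨 : InverseSystem.{u}) (pX : Expansion X 𝓧) (pY : Expansion Y 𝓨)
    (F : SysMor 𝓧 𝓨) (G : SysMor 𝓨 𝓧)
    (hinv₁ : (ProMor.mk G).comp (ProMor.mk F) = ProMor.id 𝓧)
    (hinv₂ : (ProMor.mk F).comp (ProMor.mk G) = ProMor.id 𝓨)
    (n : ℕ) (hF : IsLeast {m : ℕ | (ProMor.mk F).DimLE m} n) :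
    IsLeast {m : ℕ | ShapeDimLE X m} n ∧ IsLeast {m : ℕ | ShapeDimLE Y m} n := by
  -- the two inverse relations, at the level of morphisms of inverse systems
  have hGF : SysMor.Equiv (SysMor.comp G F) (SysMor.identity 𝓧) := by
    have h1 : ProMor.mk (SysMor.comp G F) = ProMor.mk (SysMor.identity 𝓧) := by
      rw [← ProMor.comp_mk, hinv₁]; rfl
    exact ProMor.mk_eq_mk_iff.mp h1
  have hFG : SysMor.Equiv (SysMor.comp F G) (SysMor.identity 𝓨) := by
    have h1 : ProMor.mk (SysMor.comp F G) = ProMor.mk (SysMor.identity 𝓨) := by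
      rw [← ProMor.comp_mk, hinv₂]; rfl
    exact ProMor.mk_eq_mk_iff.mp h1
  -- `F` itself has dimension `≤ n`
  have hFn : F.DimLE n := by
    obtain ⟨F₀, hmk, hF₀⟩ := hF.1
    exact SysMor.dimLE_of_equiv (ProMor.mk_eq_mk_iff.mp hmk) hF₀
  -- `F ~ F ∘ (G ∘ F)`
  have hFGF : SysMor.Equiv (SysMor.comp F (SysMor.comp G F)) F :=
    SysMor.equiv_trans (SysMor.equiv_comp_left F hGF) (SysMor.equiv_comp_id F)
  constructor
  · constructor
    · exact shapeDimLE_of_bond_factors pX (bond_factors_source hGF hFn)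
    · intro m hm
      obtain ⟨𝓧', pX', hdom⟩ := hm
      exact hF.2 ⟨F, rfl, SysMor.dimLE_of_dominated_expansion pX pX' hdom F⟩
  · constructor
    · exact shapeDimLE_of_bond_factors pY (bond_factors_target hFG hFn)
    · intro m hm
      obtain ⟨𝓨', pY', hdom⟩ := hm
      have hGm : G.DimLE m := SysMor.dimLE_of_dominated_expansion pY pY' hdom G
      have : (SysMor.comp F (SysMor.comp G F)).DimLE m :=
        SysMor.dimLE_comp_left F (SysMor.dimLE_comp_right F hGm)
      exact hF.2 ⟨F, rfl, SysMor.dimLE_of_equiv hFGF this⟩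

end ShapePaper
end
end
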